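/- Let f > 0 and h₀ be real constants. Define for all t ∈ ℝ and (x, y) ∈ ℝ² (using polar radius r = √(x²+y²)): U(t,r) = f²·t·r/(1 + f²t²), V(t,r) = f·r/(1 + f²t²), h(t,r) = h₀/(1 + f²t²). Then the corresponding Cartesian velocity field u = (U·x − V·y)/r, v = (U·y + V·x)/r (extended by u = v = 0 at r = 0) together with this h satisfies the non-rotating shallow water equations u_t + u·u_x + v·u_y + g·h_x = 0, v_t + u·v_x + v·v_y + g·h_y = 0, h_t + (u·h)_x + (v·h)_y = 0. -/

import Mathlib

/-- The rotationally-symmetric fields U = f²tr/(1+f²t²), V = fr/(1+f²t²),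
h = h₀/(1+f²t²), written in Cartesian coordinates (extended by zero velocity
at the origin), satisfy the non-rotating shallow water equations. -/
theorem sw_solution_from_rest_state
    (f g h₀ : ℝ) (hf : 0 < f)
    (U V : ℝ → ℝ → ℝ) (u v h : ℝ → ℝ → ℝ → ℝ)
    (hU : U = fun t r => f ^ 2 * t * r / (1 + f ^ 2 * t ^ 2))
    (hV : V = fun t r => f * r / (1 + f ^ 2 * t ^ 2))
    (hu : u = fun t x y =>
        if x = 0 ∧ y = 0 then 0 else
          (U t (Real.sqrt (x ^ 2 + y ^ 2)) * x - V t (Real.sqrt (x ^ 2 + y ^ 2)) * y)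
            / Real.sqrt (x ^ 2 + y ^ 2))
    (hv : v = fun t x y =>
        if x = 0 ∧ y = 0 then 0 else
          (U t (Real.sqrt (x ^ 2 + y ^ 2)) * y + V t (Real.sqrt (x ^ 2 + y ^ 2)) * x)
            / Real.sqrt (x ^ 2 + y ^ 2))
    (hh : h = fun t _x _y => h₀ / (1 + f ^ 2 * t ^ 2)) :
    ∀ t x y : ℝ,
      (deriv (fun s => u s x y) t
        + u t x y * deriv (fun s => u t s y) x
        + v t x y * deriv (fun s => u t x s) y
        + g * deriv (fun s => h t s y) x = 0) ∧
      (deriv (fun s => v s x y) t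
        + u t x y * deriv (fun s => v t s y) x
        + v t x y * deriv (fun s => v t x s) y
        + g * deriv (fun s => h t x s) y = 0) ∧
      (deriv (fun s => h s x y) t
        + deriv (fun s => u t s y * h t s y) x
        + deriv (fun s => v t x s * h t x s) y = 0) := by
  -- closed forms for u and v
  have hDpos : ∀ t : ℝ, (0:ℝ) < 1 + f ^ 2 * t ^ 2 := fun t => by positivity
  have hDne : ∀ t : ℝ, (1 + f ^ 2 * t ^ 2) ≠ 0 := fun t => (hDpos t).ne'
  have keyu : ∀ t x y : ℝ, u t x y = (f ^ 2 * t * x - f * y) / (1 + f ^ 2 * t ^ 2) := by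
    intro t x y
    rw [hu, hU, hV]
    by_cases hxy : x = 0 ∧ y = 0
    · obtain ⟨hx, hy⟩ := hxy; simp [hx, hy]
    · simp only [if_neg hxy]
      have hpos : (0:ℝ) < x ^ 2 + y ^ 2 := by
        rcases not_and_or.mp hxy with hx | hy
        · have := pow_pos (abs_pos.mpr hx) 2
          nlinarith [sq_nonneg y, sq_abs x]
        · have := pow_pos (abs_pos.mpr hy) 2
          nlinarith [sq_nonneg x, sq_abs y]
      have hr : Real.sqrt (x ^ 2 + y ^ 2) ≠ 0 := (Real.sqrt_pos.mpr hpos).ne'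
      field_simp
  have keyv : ∀ t x y : ℝ, v t x y = (f ^ 2 * t * y + f * x) / (1 + f ^ 2 * t ^ 2) := by
    intro t x y
    rw [hv, hU, hV]
    by_cases hxy : x = 0 ∧ y = 0
    · obtain ⟨hx, hy⟩ := hxy; simp [hx, hy]
    · simp only [if_neg hxy]
      have hpos : (0:ℝ) < x ^ 2 + y ^ 2 := by
        rcases not_and_or.mp hxy with hx | hy
        · have := pow_pos (abs_pos.mpr hx) 2
          nlinarith [sq_nonneg y, sq_abs x]
        · have := pow_pos (abs_pos.mpr hy) 2
          nlinarith [sq_nonneg x, sq_abs y]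
      have hr : Real.sqrt (x ^ 2 + y ^ 2) ≠ 0 := (Real.sqrt_pos.mpr hpos).ne'
      field_simp
  intro t x y
  have hD := hDne t
  -- derivative of the denominator in time
  have hden : HasDerivAt (fun s : ℝ => 1 + f ^ 2 * s ^ 2) (f ^ 2 * (2 * t ^ 1)) t := by
    exact ((hasDerivAt_pow 2 t).const_mul (f ^ 2)).const_add 1
  -- time derivative of u
  have hut : deriv (fun s => u s x y) t =
      (f ^ 2 * x * (1 + f ^ 2 * t ^ 2) -
        (f ^ 2 * t * x - f * y) * (f ^ 2 * (2 * t ^ 1))) / (1 + f ^ 2 * t ^ 2) ^ 2 := by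
    have e : (fun s => u s x y) = fun s => (f ^ 2 * s * x - f * y) / (1 + f ^ 2 * s ^ 2) := by
      funext s; exact keyu s x y
    rw [e]
    have hnum : HasDerivAt (fun s : ℝ => f ^ 2 * s * x - f * y) (f ^ 2 * x) t := by
      have h1 : HasDerivAt (fun s : ℝ => f ^ 2 * s * x) (f ^ 2 * x) t := by
        simpa using ((hasDerivAt_id t).const_mul (f ^ 2)).mul_const x
      exact h1.sub_const (f * y)
    exact (hnum.div hden hD).deriv
  -- time derivative of v
  have hvt : deriv (fun s => v s x y) t =
      (f ^ 2 * y * (1 + f ^ 2 * t ^ 2) -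
        (f ^ 2 * t * y + f * x) * (f ^ 2 * (2 * t ^ 1))) / (1 + f ^ 2 * t ^ 2) ^ 2 := by
    have e : (fun s => v s x y) = fun s => (f ^ 2 * s * y + f * x) / (1 + f ^ 2 * s ^ 2) := by
      funext s; exact keyv s x y
    rw [e]
    have hnum : HasDerivAt (fun s : ℝ => f ^ 2 * s * y + f * x) (f ^ 2 * y) t := by
      have h1 : HasDerivAt (fun s : ℝ => f ^ 2 * s * y) (f ^ 2 * y) t := by
        simpa using ((hasDerivAt_id t).const_mul (f ^ 2)).mul_const y
      exact h1.add_const (f * x)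
    exact (hnum.div hden hD).deriv
  -- time derivative of h
  have hht : deriv (fun s => h s x y) t =
      (0 * (1 + f ^ 2 * t ^ 2) - h₀ * (f ^ 2 * (2 * t ^ 1))) / (1 + f ^ 2 * t ^ 2) ^ 2 := by
    have e : (fun s => h s x y) = fun s => h₀ / (1 + f ^ 2 * s ^ 2) := by
      funext s; rw [hh]
    rw [e]
    exact ((hasDerivAt_const t h₀).div hden hD).deriv
  -- spatial derivatives of u
  have hux : deriv (fun s => u t s y) x = f ^ 2 * t / (1 + f ^ 2 * t ^ 2) := by
    have e : (fun s => u t s y) = fun s => (f ^ 2 * t * s - f * y) / (1 + f ^ 2 * t ^ 2) := by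
      funext s; exact keyu t s y
    rw [e]
    have hnum : HasDerivAt (fun s : ℝ => f ^ 2 * t * s - f * y) (f ^ 2 * t) x := by
      simpa using (((hasDerivAt_id x).const_mul (f ^ 2 * t)).sub_const (f * y))
    simpa using (hnum.div_const (1 + f ^ 2 * t ^ 2)).deriv
  have huy : deriv (fun s => u t x s) y = -f / (1 + f ^ 2 * t ^ 2) := by
    have e : (fun s => u t x s) = fun s => (f ^ 2 * t * x - f * s) / (1 + f ^ 2 * t ^ 2) := by
      funext s; exact keyu t x s
    rw [e]
    have hnum : HasDerivAt (fun s : ℝ => f ^ 2 * t * x - f * s) (-f) y := by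
      simpa using (((hasDerivAt_id y).const_mul f).const_sub (f ^ 2 * t * x))
    simpa using (hnum.div_const (1 + f ^ 2 * t ^ 2)).deriv
  -- spatial derivatives of v
  have hvx : deriv (fun s => v t s y) x = f / (1 + f ^ 2 * t ^ 2) := by
    have e : (fun s => v t s y) = fun s => (f ^ 2 * t * y + f * s) / (1 + f ^ 2 * t ^ 2) := by
      funext s; exact keyv t s y
    rw [e]
    have hnum : HasDerivAt (fun s : ℝ => f ^ 2 * t * y + f * s) f x := by
      simpa using (((hasDerivAt_id x).const_mul f).const_add (f ^ 2 * t * y))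
    simpa using (hnum.div_const (1 + f ^ 2 * t ^ 2)).deriv
  have hvy : deriv (fun s => v t x s) y = f ^ 2 * t / (1 + f ^ 2 * t ^ 2) := by
    have e : (fun s => v t x s) = fun s => (f ^ 2 * t * s + f * x) / (1 + f ^ 2 * t ^ 2) := by
      funext s; exact keyv t x s
    rw [e]
    have hnum : HasDerivAt (fun s : ℝ => f ^ 2 * t * s + f * x) (f ^ 2 * t) y := by
      simpa using (((hasDerivAt_id y).const_mul (f ^ 2 * t)).add_const (f * x))
    simpa using (hnum.div_const (1 + f ^ 2 * t ^ 2)).deriv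
  -- spatial derivatives of h vanish
  have hhx : deriv (fun s => h t s y) x = 0 := by
    have e : (fun s => h t s y) = fun _ => h₀ / (1 + f ^ 2 * t ^ 2) := by
      funext s; rw [hh]
    rw [e]; simp
  have hhy : deriv (fun s => h t x s) y = 0 := by
    have e : (fun s => h t x s) = fun _ => h₀ / (1 + f ^ 2 * t ^ 2) := by
      funext s; rw [hh]
    rw [e]; simp
  -- flux derivatives
  have hfx : deriv (fun s => u t s y * h t s y) x =
      (f ^ 2 * t / (1 + f ^ 2 * t ^ 2)) * (h₀ / (1 + f ^ 2 * t ^ 2)) := by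
    have e : (fun s => u t s y * h t s y) =
        fun s => ((f ^ 2 * t * s - f * y) / (1 + f ^ 2 * t ^ 2)) *
          (h₀ / (1 + f ^ 2 * t ^ 2)) := by
      funext s; rw [keyu, hh]
    rw [e]
    have hnum : HasDerivAt (fun s : ℝ => f ^ 2 * t * s - f * y) (f ^ 2 * t) x := by
      simpa using (((hasDerivAt_id x).const_mul (f ^ 2 * t)).sub_const (f * y))
    exact ((hnum.div_const (1 + f ^ 2 * t ^ 2)).mul_const
      (h₀ / (1 + f ^ 2 * t ^ 2))).deriv
  have hfy : deriv (fun s => v t x s * h t x s) y =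
      (f ^ 2 * t / (1 + f ^ 2 * t ^ 2)) * (h₀ / (1 + f ^ 2 * t ^ 2)) := by
    have e : (fun s => v t x s * h t x s) =
        fun s => ((f ^ 2 * t * s + f * x) / (1 + f ^ 2 * t ^ 2)) *
          (h₀ / (1 + f ^ 2 * t ^ 2)) := by
      funext s; rw [keyv, hh]
    rw [e]
    have hnum : HasDerivAt (fun s : ℝ => f ^ 2 * t * s + f * x) (f ^ 2 * t) y := by
      simpa using (((hasDerivAt_id y).const_mul (f ^ 2 * t)).add_const (f * x))
    exact ((hnum.div_const (1 + f ^ 2 * t ^ 2)).mul_const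
      (h₀ / (1 + f ^ 2 * t ^ 2))).deriv
  refine ⟨?_, ?_, ?_⟩
  · rw [hut, keyu, keyv, hux, huy, hhx]
    field_simp
    ring
  · rw [hvt, keyu, keyv, hvx, hvy, hhy]
    field_simp
    ring
  · rw [hht, hfx, hfy, div_mul_div_comm]
    have h2 : ((1 + f ^ 2 * t ^ 2) ^ 2) ≠ 0 := pow_ne_zero 2 hD
    have h4 : ((1 + f ^ 2 * t ^ 2) * (1 + f ^ 2 * t ^ 2)) ≠ 0 := mul_ne_zero hD hD
    rw [div_add_div _ _ h2 h4, div_add_div _ _ (mul_ne_zero h2 h4) h4,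
      div_eq_zero_iff]
    left; ring
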